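/- Let Y*ₜ = μ* + (T₄*)ₜ δ + ε*ₜ for t = 1,…,n, where T₄* is 0 on the first n₁+n₂ coordinates and 2 on the remaining ones, and ε*ₜ are real numbers. Let T₃ be 0 on the first n₁ coordinates, 1 on the next n₂+n₃, and 2 on the last n₄. For a vector T, define μ̂(T) = (1/n)Σₜ(Y*ₜ − Tₜδ) and Qₙ(T) = Σₜ(Y*ₜ − μ̂(T) − Tₜδ)². Then Qₙ(T₃) − Qₙ(T₄*) = 2δA + δ²V, where V = n₂+n₃−(n₂−n₃)²/n and A = ((n₂−n₃)/n)Σ_{t∈J₁∪J₄}ε*ₜ + ((n₂−n₃)/n + 1)Σ_{t∈J₃}ε*ₜ + ((n₂−n₃)/n − 1)Σ_{t∈J₂}ε*ₜ, with J₁,J₂,J₃,J₄ the consecutive blocks of sizes n₁,n₂,n₃,n₄. -/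

import Mathlib

lemma ind_sum_aux (n a b : ℕ) (hab : a ≤ b) (hbn : b ≤ n) :
    ∑ t : Fin n, (if a ≤ (t : ℕ) ∧ (t : ℕ) < b then (1:ℝ) else 0) = (b : ℝ) - a := by
  rw [Fin.sum_univ_eq_sum_range (fun i => if a ≤ i ∧ i < b then (1:ℝ) else 0)]
  rw [Finset.sum_boole]
  have h : (Finset.range n).filter (fun i => a ≤ i ∧ i < b) = Finset.Ico a b := by
    ext i; simp [Finset.mem_Ico]; omega
  rw [h, Nat.card_Ico, Nat.cast_sub hab]

/-- Deterministic decomposition `Qₙ(T₃) − Qₙ(T₄*) = 2δA + δ²V` of the difference of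
residual sums of squares between the three-segment segmentation `T₃` and the true
two-segment segmentation `T₄*`. -/
theorem Q_diff_decomposition
    (n₁ n₂ n₃ n₄ n : ℕ) (h₁ : 0 < n₁) (h₂ : 0 < n₂) (h₃ : 0 < n₃) (h₄ : 0 < n₄)
    (hn : n = n₁ + n₂ + n₃ + n₄)
    (δ μstar : ℝ) (ε Y T₃ T₄ : Fin n → ℝ)
    (hT₄ : ∀ t : Fin n, T₄ t = if (t : ℕ) < n₁ + n₂ then 0 else 2)
    (hT₃ : ∀ t : Fin n, T₃ t =
      if (t : ℕ) < n₁ then 0 else if (t : ℕ) < n₁ + n₂ + n₃ then 1 else 2)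
    (hY : ∀ t : Fin n, Y t = μstar + T₄ t * δ + ε t)
    (μhat : (Fin n → ℝ) → ℝ)
    (hμhat : ∀ T : Fin n → ℝ, μhat T = (1 / (n : ℝ)) * ∑ t, (Y t - T t * δ))
    (Q : (Fin n → ℝ) → ℝ)
    (hQ : ∀ T : Fin n → ℝ, Q T = ∑ t, (Y t - μhat T - T t * δ) ^ 2)
    (A V : ℝ)
    (hA : A = (((n₂ : ℝ) - n₃) / n) *
        (∑ t ∈ Finset.univ.filter
          (fun t : Fin n => (t : ℕ) < n₁ ∨ n₁ + n₂ + n₃ ≤ (t : ℕ)), ε t) +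
      (((n₂ : ℝ) - n₃) / n + 1) *
        (∑ t ∈ Finset.univ.filter
          (fun t : Fin n => n₁ + n₂ ≤ (t : ℕ) ∧ (t : ℕ) < n₁ + n₂ + n₃), ε t) +
      (((n₂ : ℝ) - n₃) / n - 1) *
        (∑ t ∈ Finset.univ.filter
          (fun t : Fin n => n₁ ≤ (t : ℕ) ∧ (t : ℕ) < n₁ + n₂), ε t))
    (hV : V = (n₂ : ℝ) + n₃ - ((n₂ : ℝ) - n₃) ^ 2 / n) :
    Q T₃ - Q T₄ = 2 * δ * A + δ ^ 2 * V := by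
  have hn0 : (n : ℝ) ≠ 0 := by
    have : 0 < n := by omega
    exact_mod_cast this.ne'
  -- block sums of ε
  set E14 : ℝ := ∑ t ∈ Finset.univ.filter
      (fun t : Fin n => (t : ℕ) < n₁ ∨ n₁ + n₂ + n₃ ≤ (t : ℕ)), ε t with hE14
  set E3 : ℝ := ∑ t ∈ Finset.univ.filter
      (fun t : Fin n => n₁ + n₂ ≤ (t : ℕ) ∧ (t : ℕ) < n₁ + n₂ + n₃), ε t with hE3
  set E2 : ℝ := ∑ t ∈ Finset.univ.filter
      (fun t : Fin n => n₁ ≤ (t : ℕ) ∧ (t : ℕ) < n₁ + n₂), ε t with hE2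
  set S : ℝ := ∑ t, ε t with hS
  set D : ℝ := ∑ t, (T₄ t - T₃ t) with hD
  set D2 : ℝ := ∑ t, (T₄ t - T₃ t) ^ 2 with hD2
  set ED : ℝ := ∑ t, ε t * (T₄ t - T₃ t) with hED
  -- pointwise indicator formula for the design difference
  have hd : ∀ t : Fin n, T₄ t - T₃ t =
      (if n₁ + n₂ ≤ (t : ℕ) ∧ (t : ℕ) < n₁ + n₂ + n₃ then (1:ℝ) else 0)
      - (if n₁ ≤ (t : ℕ) ∧ (t : ℕ) < n₁ + n₂ then (1:ℝ) else 0) := by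
    intro t
    rw [hT₄ t, hT₃ t]
    split_ifs <;> first | (exfalso; omega) | norm_num
  -- value of D
  have hDval : D = (n₃ : ℝ) - n₂ := by
    have e3 : ∑ t : Fin n,
        (if n₁ + n₂ ≤ (t : ℕ) ∧ (t : ℕ) < n₁ + n₂ + n₃ then (1:ℝ) else 0)
        = ((n₁ + n₂ + n₃ : ℕ) : ℝ) - ((n₁ + n₂ : ℕ) : ℝ) :=
      ind_sum_aux n (n₁ + n₂) (n₁ + n₂ + n₃) (by omega) (by omega)
    have e2 : ∑ t : Fin n,
        (if n₁ ≤ (t : ℕ) ∧ (t : ℕ) < n₁ + n₂ then (1:ℝ) else 0)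
        = ((n₁ + n₂ : ℕ) : ℝ) - ((n₁ : ℕ) : ℝ) :=
      ind_sum_aux n n₁ (n₁ + n₂) (by omega) (by omega)
    rw [hD]
    calc ∑ t, (T₄ t - T₃ t)
        = ∑ t : Fin n,
          ((if n₁ + n₂ ≤ (t : ℕ) ∧ (t : ℕ) < n₁ + n₂ + n₃ then (1:ℝ) else 0)
          - (if n₁ ≤ (t : ℕ) ∧ (t : ℕ) < n₁ + n₂ then (1:ℝ) else 0)) :=
          Finset.sum_congr rfl (fun t _ => hd t)
      _ = ((n₁ + n₂ + n₃ : ℕ) : ℝ) - ((n₁ + n₂ : ℕ) : ℝ)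
          - (((n₁ + n₂ : ℕ) : ℝ) - ((n₁ : ℕ) : ℝ)) := by
          rw [Finset.sum_sub_distrib, e3, e2]
      _ = (n₃ : ℝ) - n₂ := by push_cast; ring
  -- value of D2
  have hD2val : D2 = (n₃ : ℝ) + n₂ := by
    have e3 : ∑ t : Fin n,
        (if n₁ + n₂ ≤ (t : ℕ) ∧ (t : ℕ) < n₁ + n₂ + n₃ then (1:ℝ) else 0)
        = ((n₁ + n₂ + n₃ : ℕ) : ℝ) - ((n₁ + n₂ : ℕ) : ℝ) :=
      ind_sum_aux n (n₁ + n₂) (n₁ + n₂ + n₃) (by omega) (by omega)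
    have e2 : ∑ t : Fin n,
        (if n₁ ≤ (t : ℕ) ∧ (t : ℕ) < n₁ + n₂ then (1:ℝ) else 0)
        = ((n₁ + n₂ : ℕ) : ℝ) - ((n₁ : ℕ) : ℝ) :=
      ind_sum_aux n n₁ (n₁ + n₂) (by omega) (by omega)
    rw [hD2]
    calc ∑ t, (T₄ t - T₃ t) ^ 2
        = ∑ t : Fin n,
          ((if n₁ + n₂ ≤ (t : ℕ) ∧ (t : ℕ) < n₁ + n₂ + n₃ then (1:ℝ) else 0)
          + (if n₁ ≤ (t : ℕ) ∧ (t : ℕ) < n₁ + n₂ then (1:ℝ) else 0)) := by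
          refine Finset.sum_congr rfl (fun t _ => ?_)
          rw [hd t]
          split_ifs <;> first | (exfalso; omega) | norm_num
      _ = ((n₁ + n₂ + n₃ : ℕ) : ℝ) - ((n₁ + n₂ : ℕ) : ℝ)
          + (((n₁ + n₂ : ℕ) : ℝ) - ((n₁ : ℕ) : ℝ)) := by
          rw [Finset.sum_add_distrib, e3, e2]
      _ = (n₃ : ℝ) + n₂ := by push_cast; ring
  -- ED in terms of block sums
  have hEDval : ED = E3 - E2 := by
    rw [hED, hE3, hE2, Finset.sum_filter, Finset.sum_filter, ← Finset.sum_sub_distrib]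
    refine Finset.sum_congr rfl (fun t _ => ?_)
    rw [hd t]
    split_ifs <;> first | (exfalso; omega) | ring1
  -- S in terms of block sums
  have hSval : S = E14 + E2 + E3 := by
    rw [hS, hE14, hE2, hE3, Finset.sum_filter, Finset.sum_filter, Finset.sum_filter,
      ← Finset.sum_add_distrib, ← Finset.sum_add_distrib]
    refine Finset.sum_congr rfl (fun t _ => ?_)
    have ht := t.isLt
    split_ifs <;> first | (exfalso; omega) | ring1
  -- the plug-in means
  have hμ4 : μhat T₄ = μstar + S / n := by
    rw [hμhat]
    have h1 : ∑ t, (Y t - T₄ t * δ) = (n : ℝ) * μstar + S := by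
      have h2 : ∑ t, (Y t - T₄ t * δ) = ∑ t, (μstar + ε t) := by
        refine Finset.sum_congr rfl (fun t _ => ?_); rw [hY t]; ring
      rw [h2, Finset.sum_add_distrib, Finset.sum_const, Finset.card_univ,
        Fintype.card_fin, nsmul_eq_mul, ← hS]
    rw [h1]; field_simp
  have hμ3 : μhat T₃ = μstar + S / n + δ * D / n := by
    rw [hμhat]
    have : ∑ t, (Y t - T₃ t * δ) = n * μstar + S + δ * D := by
      have h1 : ∑ t, (Y t - T₃ t * δ) = ∑ t, (μstar + ε t + δ * (T₄ t - T₃ t)) := by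
        refine Finset.sum_congr rfl (fun t _ => ?_); rw [hY t]; ring
      rw [h1, Finset.sum_add_distrib, Finset.sum_add_distrib, Finset.sum_const,
        Finset.card_univ, Fintype.card_fin, nsmul_eq_mul, ← Finset.mul_sum, ← hS, ← hD]
    rw [this]; field_simp
  -- pointwise expansion of the difference of squared residuals
  have key : ∀ t : Fin n,
      (Y t - μhat T₃ - T₃ t * δ) ^ 2 - (Y t - μhat T₄ - T₄ t * δ) ^ 2 =
      (-2 * δ * (D / n)) * ε t + (-2 * δ * (S / n) - 2 * δ ^ 2 * (D / n)) * (T₄ t - T₃ t)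
      + (2 * δ) * (ε t * (T₄ t - T₃ t)) + δ ^ 2 * (T₄ t - T₃ t) ^ 2
      + (2 * δ * (S / n) * (D / n) + δ ^ 2 * (D / n) ^ 2) := by
    intro t
    rw [hY t, hμ3, hμ4]
    ring
  have hQdiff : Q T₃ - Q T₄ =
      (-2 * δ * (D / n)) * S + (-2 * δ * (S / n) - 2 * δ ^ 2 * (D / n)) * D
      + (2 * δ) * ED + δ ^ 2 * D2
      + n * (2 * δ * (S / n) * (D / n) + δ ^ 2 * (D / n) ^ 2) := by
    rw [hQ T₃, hQ T₄, ← Finset.sum_sub_distrib]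
    calc (∑ t, ((Y t - μhat T₃ - T₃ t * δ) ^ 2 - (Y t - μhat T₄ - T₄ t * δ) ^ 2))
        = ∑ t, ((-2 * δ * (D / n)) * ε t
            + (-2 * δ * (S / n) - 2 * δ ^ 2 * (D / n)) * (T₄ t - T₃ t)
            + (2 * δ) * (ε t * (T₄ t - T₃ t)) + δ ^ 2 * (T₄ t - T₃ t) ^ 2
            + (2 * δ * (S / n) * (D / n) + δ ^ 2 * (D / n) ^ 2)) :=
          Finset.sum_congr rfl (fun t _ => key t)
      _ = _ := by
          simp only [Finset.sum_add_distrib, ← Finset.mul_sum, Finset.sum_const,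
            Finset.card_univ, Fintype.card_fin, nsmul_eq_mul, ← hS, ← hD, ← hED, ← hD2]
          ring
  rw [hQdiff, hEDval, hSval, hDval, hD2val, hA, hV]
  field_simp
  ring
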